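/- Every countable group can be embedded into a two-generated group. -/

import Mathlib

open Function Monoid

namespace TwoGenEmbedAux

noncomputable section

/-- The shift action of `Multiplicative ℤ` on `FreeGroup ℤ`. -/
def ψ : Multiplicative ℤ →* MulAut (FreeGroup ℤ) where
  toFun k := FreeGroup.freeGroupCongr (Equiv.addRight (Multiplicative.toAdd k))
  map_one' := by
    have h : Equiv.addRight (Multiplicative.toAdd (1 : Multiplicative ℤ)) = Equiv.refl ℤ := by
      ext y
      simp
    show FreeGroup.freeGroupCongr (Equiv.addRight (Multiplicative.toAdd (1 : Multiplicative ℤ))) = 1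
    rw [h, FreeGroup.freeGroupCongr_refl, MulAut.one_def]
  map_mul' k₁ k₂ := by
    have h : Equiv.addRight (Multiplicative.toAdd (k₁ * k₂)) =
        (Equiv.addRight (Multiplicative.toAdd k₂)).trans
          (Equiv.addRight (Multiplicative.toAdd k₁)) := by
      ext y
      simp only [toAdd_mul, Equiv.trans_apply, Equiv.coe_addRight]
      omega
    show FreeGroup.freeGroupCongr (Equiv.addRight (Multiplicative.toAdd (k₁ * k₂))) =
      FreeGroup.freeGroupCongr (Equiv.addRight (Multiplicative.toAdd k₁)) *
        FreeGroup.freeGroupCongr (Equiv.addRight (Multiplicative.toAdd k₂))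
    rw [MulAut.mul_def, h, ← FreeGroup.freeGroupCongr_trans]

abbrev T := SemidirectProduct (FreeGroup ℤ) (Multiplicative ℤ) ψ

lemma map_neg_injective :
    Function.Injective (FreeGroup.map (fun n : ℕ => -(n : ℤ))) := by
  have key : (FreeGroup.map (fun z : ℤ => (-z).toNat)).comp
      (FreeGroup.map (fun n : ℕ => -(n : ℤ))) = MonoidHom.id _ := by
    apply FreeGroup.ext_hom
    intro n
    simp [FreeGroup.map.of]
  intro x y h
  have h2 := congrArg (FreeGroup.map (fun z : ℤ => (-z).toNat)) h
  have hx := DFunLike.congr_fun key x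
  have hy := DFunLike.congr_fun key y
  simp only [MonoidHom.comp_apply, MonoidHom.id_apply] at hx hy
  rw [hx, hy] at h2
  exact h2

/-- The elements `u^{-n} v u^{n}`, for `u ≠ v` generators of `F₂`, freely generate. -/
lemma conj_lift_injective (u v : Bool) (huv : v ≠ u) :
    Function.Injective (FreeGroup.lift (fun n : ℕ =>
      ((FreeGroup.of u) ^ n)⁻¹ * FreeGroup.of v * (FreeGroup.of u) ^ n) :
        FreeGroup ℕ →* FreeGroup Bool) := by
  set j : FreeGroup ℕ →* FreeGroup Bool := FreeGroup.lift (fun n : ℕ =>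
      ((FreeGroup.of u) ^ n)⁻¹ * FreeGroup.of v * (FreeGroup.of u) ^ n) with hj
  set Θ : FreeGroup Bool →* T := FreeGroup.lift (fun x : Bool =>
      if x = u then SemidirectProduct.inr (Multiplicative.ofAdd (1 : ℤ))
      else SemidirectProduct.inl (FreeGroup.of (0 : ℤ))) with hΘ
  have key : Θ.comp j =
      SemidirectProduct.inl.comp (FreeGroup.map (fun n : ℕ => -(n : ℤ))) := by
    apply FreeGroup.ext_hom
    intro n
    have hu : Θ (FreeGroup.of u) = SemidirectProduct.inr (Multiplicative.ofAdd (1 : ℤ)) := by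
      simp [hΘ]
    have hv : Θ (FreeGroup.of v) = SemidirectProduct.inl (FreeGroup.of (0 : ℤ)) := by
      simp [hΘ, huv]
    have hgpow : (SemidirectProduct.inr (Multiplicative.ofAdd (1 : ℤ)) : T) ^ n =
        SemidirectProduct.inr (Multiplicative.ofAdd (n : ℤ)) := by
      rw [← map_pow]
      congr 1
      rw [← ofAdd_nsmul]
      norm_num
    have haut : ∀ x : FreeGroup ℤ,
        (SemidirectProduct.inr (Multiplicative.ofAdd (n : ℤ)) : T)⁻¹ *
          SemidirectProduct.inl x *
          SemidirectProduct.inr (Multiplicative.ofAdd (n : ℤ)) =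
        SemidirectProduct.inl ((ψ (Multiplicative.ofAdd (n : ℤ)))⁻¹ x) := by
      intro x
      rw [SemidirectProduct.inl_aut_inv, map_inv]
    calc (Θ.comp j) (FreeGroup.of n)
        = (Θ (FreeGroup.of u) ^ n)⁻¹ * Θ (FreeGroup.of v) * Θ (FreeGroup.of u) ^ n := by
          simp [hj, map_mul, map_inv, map_pow]
      _ = (SemidirectProduct.inr (Multiplicative.ofAdd (n : ℤ)) : T)⁻¹ *
            SemidirectProduct.inl (FreeGroup.of (0 : ℤ)) *
            SemidirectProduct.inr (Multiplicative.ofAdd (n : ℤ)) := by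
          rw [hu, hv, hgpow]
      _ = SemidirectProduct.inl
            ((ψ (Multiplicative.ofAdd (n : ℤ)))⁻¹ (FreeGroup.of (0 : ℤ))) := haut _
      _ = (SemidirectProduct.inl.comp (FreeGroup.map (fun n : ℕ => -(n : ℤ))))
            (FreeGroup.of n) := by
          simp only [MonoidHom.comp_apply, FreeGroup.map.of]
          congr 1
          rw [← map_inv]
          simp [ψ, FreeGroup.freeGroupCongr_apply, FreeGroup.map.of]
  have h2 : Function.Injective (⇑Θ ∘ ⇑j) := by
    rw [← MonoidHom.coe_comp, key, MonoidHom.coe_comp]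
    exact SemidirectProduct.inl_injective.comp map_neg_injective
  exact h2.of_comp

end

end TwoGenEmbedAux

/-- Every countable group can be embedded into a two-generated group. -/
theorem countable_group_embeds_into_two_generated_group
    (G : Type) [Group G] [Countable G] :
    ∃ (H : Type) (_ : Group H) (f : G →* H),
      Function.Injective f ∧
      ∃ a b : H, Subgroup.closure ({a, b} : Set H) = ⊤ := by
  classical
  obtain ⟨e', he'⟩ := exists_surjective_nat G
  -- enumeration with `e 0 = 1`
  set e : ℕ → G := fun n => Nat.rec 1 (fun k _ => e' k) n with he
  set va : FreeGroup Bool := FreeGroup.of true with hva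
  set vb : FreeGroup Bool := FreeGroup.of false with hvb
  -- the two free families
  set fA : FreeGroup ℕ →* (Coprod G (FreeGroup Bool)) :=
    FreeGroup.lift (fun n => Coprod.inr ((vb ^ n)⁻¹ * va * vb ^ n)) with hfAdef
  set fB : FreeGroup ℕ →* (Coprod G (FreeGroup Bool)) :=
    FreeGroup.lift (fun n => Coprod.inl (e n) * Coprod.inr ((va ^ n)⁻¹ * vb * va ^ n)) with hfBdef
  -- injectivity of fA
  have hjb := TwoGenEmbedAux.conj_lift_injective false true (by decide)
  have hfA : Function.Injective fA := by
    have hcomp : (Coprod.inr.comp (FreeGroup.lift (fun n : ℕ =>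
        ((FreeGroup.of false) ^ n)⁻¹ * FreeGroup.of true * (FreeGroup.of false) ^ n)) :
          FreeGroup ℕ →* (Coprod G (FreeGroup Bool))) = fA := by
      apply FreeGroup.ext_hom
      intro n
      simp [hfAdef, hva, hvb]
    intro x y hxy
    apply hjb
    apply Coprod.inr_injective (M := G)
    have hx := DFunLike.congr_fun hcomp x
    have hy := DFunLike.congr_fun hcomp y
    simp only [MonoidHom.comp_apply] at hx hy
    rw [hx, hy]
    exact hxy
  -- injectivity of fB, via the retraction killing G
  have hja := TwoGenEmbedAux.conj_lift_injective true false (by decide)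
  have hfB : Function.Injective fB := by
    set r : (Coprod G (FreeGroup Bool)) →* FreeGroup Bool := Coprod.lift 1 (MonoidHom.id _) with hr
    have hcomp : r.comp fB = FreeGroup.lift (fun n : ℕ =>
        ((FreeGroup.of true) ^ n)⁻¹ * FreeGroup.of false * (FreeGroup.of true) ^ n) := by
      apply FreeGroup.ext_hom
      intro n
      simp [hfBdef, hr, hva, hvb, Coprod.lift_apply_inl, Coprod.lift_apply_inr]
    intro x y hxy
    apply hja
    have hx := DFunLike.congr_fun hcomp x
    have hy := DFunLike.congr_fun hcomp y
    simp only [MonoidHom.comp_apply] at hx hy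
    rw [← hx, ← hy, hxy]
  -- the HNN data
  set A : Subgroup (Coprod G (FreeGroup Bool)) := fA.range with hA
  set B : Subgroup (Coprod G (FreeGroup Bool)) := fB.range with hB
  set φ : A ≃* B := (MonoidHom.ofInjective hfA).symm.trans (MonoidHom.ofInjective hfB) with hφ
  refine ⟨HNNExtension (Coprod G (FreeGroup Bool)) A B φ, inferInstance,
    HNNExtension.of.comp Coprod.inl, ?_, ?_⟩
  · intro x y hxy
    simp only [MonoidHom.comp_apply] at hxy
    exact Coprod.inl_injective (HNNExtension.of_injective φ hxy)
  · refine ⟨HNNExtension.of (Coprod.inr va), (HNNExtension.t : HNNExtension (Coprod G (FreeGroup Bool)) A B φ), ?_⟩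
    set K := Subgroup.closure
      ({HNNExtension.of (Coprod.inr va), (HNNExtension.t : HNNExtension (Coprod G (FreeGroup Bool)) A B φ)} : Set (HNNExtension (Coprod G (FreeGroup Bool)) A B φ)) with hK
    have ha : HNNExtension.of (Coprod.inr va) ∈ K :=
      Subgroup.subset_closure (by simp)
    have hb : ((HNNExtension.t : HNNExtension (Coprod G (FreeGroup Bool)) A B φ) : HNNExtension (Coprod G (FreeGroup Bool)) A B φ) ∈ K :=
      Subgroup.subset_closure (by simp)
    -- the key conjugation relation
    have hconj : ∀ w : FreeGroup ℕ,
        HNNExtension.of (fB w) =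
          (HNNExtension.t : HNNExtension (Coprod G (FreeGroup Bool)) A B φ) * HNNExtension.of (fA w) * (HNNExtension.t : HNNExtension (Coprod G (FreeGroup Bool)) A B φ)⁻¹ := by
      intro w
      have hmem : fA w ∈ A := ⟨w, rfl⟩
      have hφw : ((φ ⟨fA w, hmem⟩ : B) : (Coprod G (FreeGroup Bool))) = fB w := by
        have h1 : (MonoidHom.ofInjective hfA) w = ⟨fA w, hmem⟩ := by
          apply Subtype.ext
          exact MonoidHom.ofInjective_apply hfA
        have h2 : (MonoidHom.ofInjective hfA).symm ⟨fA w, hmem⟩ = w := by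
          rw [← h1, MulEquiv.symm_apply_apply]
        rw [hφ]
        simp only [MulEquiv.trans_apply, h2]
        exact MonoidHom.ofInjective_apply hfB
      have := HNNExtension.equiv_eq_conj (G := (Coprod G (FreeGroup Bool))) (A := A) (B := B) (φ := φ) ⟨fA w, hmem⟩
      rw [hφw] at this
      exact this
    -- all elements of the free factor F₂ are in K
    have hFa : ∀ x : Bool, HNNExtension.of (Coprod.inr (FreeGroup.of x) : (Coprod G (FreeGroup Bool))) ∈ K := by
      intro x
      cases x
      · -- vb : use the relation for w = FreeGroup.of 0
        have h0 := hconj (FreeGroup.of 0)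
        have hA0 : fA (FreeGroup.of 0) = Coprod.inr va := by
          simp [hfAdef]
        have hB0 : fB (FreeGroup.of 0) = Coprod.inr vb := by
          have he0 : e 0 = 1 := rfl
          simp [hfBdef, he0]
        rw [hA0, hB0] at h0
        rw [← hvb, h0]
        exact K.mul_mem (K.mul_mem hb ha) (K.inv_mem hb)
      · simpa [hva] using ha
    have hF : ∀ x : FreeGroup Bool, HNNExtension.of (Coprod.inr x : (Coprod G (FreeGroup Bool))) ∈ K := by
      intro x
      induction x using FreeGroup.induction_on with
      | C1 => simpa using K.one_mem
      | of y => exact hFa y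
      | inv_of y hy =>
        rw [map_inv, map_inv]
        exact K.inv_mem hy
      | mul y z hy hz =>
        rw [map_mul, map_mul]
        exact K.mul_mem hy hz
    -- all elements of G are in K
    have hG : ∀ g : G, HNNExtension.of (Coprod.inl g : (Coprod G (FreeGroup Bool))) ∈ K := by
      intro g
      obtain ⟨k, hk⟩ := he' g
      have hw := hconj (FreeGroup.of (k + 1))
      have hAw : fA (FreeGroup.of (k + 1)) =
          Coprod.inr ((vb ^ (k + 1))⁻¹ * va * vb ^ (k + 1)) := by
        simp [hfAdef]
      have hBw : fB (FreeGroup.of (k + 1)) =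
          Coprod.inl g * Coprod.inr ((va ^ (k + 1))⁻¹ * vb * va ^ (k + 1)) := by
        have hek : e (k + 1) = g := hk
        simp [hfBdef, hek]
      rw [hAw, hBw] at hw
      have h1 : HNNExtension.of
          (Coprod.inr ((vb ^ (k + 1))⁻¹ * va * vb ^ (k + 1)) : (Coprod G (FreeGroup Bool))) ∈ K := hF _
      have h2 : HNNExtension.of
          (Coprod.inr ((va ^ (k + 1))⁻¹ * vb * va ^ (k + 1)) : (Coprod G (FreeGroup Bool))) ∈ K := hF _
      have h3 : HNNExtension.of (Coprod.inl g : (Coprod G (FreeGroup Bool))) *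
          HNNExtension.of (Coprod.inr ((va ^ (k + 1))⁻¹ * vb * va ^ (k + 1)) : (Coprod G (FreeGroup Bool))) ∈ K := by
        rw [← map_mul, hw]
        exact K.mul_mem (K.mul_mem hb h1) (K.inv_mem hb)
      have := K.mul_mem h3 (K.inv_mem h2)
      simpa [mul_assoc] using this
    -- all elements of (Coprod G (FreeGroup Bool)) are in K
    have hPmem : ∀ p : (Coprod G (FreeGroup Bool)), HNNExtension.of p ∈ K := by
      intro p
      induction p using Coprod.induction_on with
      | inl g => exact hG g
      | inr x => exact hF x
      | mul x y hx hy =>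
        rw [map_mul]
        exact K.mul_mem hx hy
    -- conclude
    rw [eq_top_iff]
    rintro x -
    induction x using HNNExtension.induction_on with
    | of g => exact hPmem g
    | t => exact hb
    | mul x y hx hy => exact K.mul_mem hx hy
    | inv x hx => exact K.inv_mem hx
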